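/- Let W be a subset of the positive integers and p ≥ 2 an integer with pW ⊆ W. For each n ∈ ℕ, let X(n) be the set of partitions of n all of whose parts lie in W ∖ pW, and let Y(n) be the set of partitions of n all of whose parts lie in W and in which every number occurs as a part at most p − 1 times. Then for every n there is a bijection between X(n) and Y(n) (given by repeatedly replacing p equal parts i by the single part pi); in particular X(n) and Y(n) have the same cardinality. -/

import Mathlib

open Finset Multiset

namespace GlaisherAux

/-- digit `k` of `m` in base `p` -/
def dgt (p k m : ℕ) : ℕ := m / p ^ k % p

open Classical in
noncomputable def dec (W : Set ℕ) (p : ℕ) (w : ℕ) : ℕ × ℕ :=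
  if h : 2 ≤ p ∧ 0 < w ∧ p ∣ w ∧ w / p ∈ W then
    ((dec W p (w / p)).1, (dec W p (w / p)).2 + 1)
  else (w, 0)
  termination_by w
  decreasing_by exact Nat.div_lt_self h.2.1 (by omega)

variable {W : Set ℕ} {p : ℕ}

lemma pow_mul_mem (hpW : ∀ w ∈ W, p * w ∈ W) {j : ℕ} (hj : j ∈ W) (k : ℕ) :
    p ^ k * j ∈ W := by
  induction k with
  | zero => simpa using hj
  | succ k ih =>
    have : p ^ (k + 1) * j = p * (p ^ k * j) := by ring
    rw [this]; exact hpW _ ih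

lemma dec_spec (hp : 2 ≤ p) : ∀ w, 0 < w → w ∈ W →
    (dec W p w).1 ∈ W ∧ 0 < (dec W p w).1 ∧ (¬∃ u ∈ W, (dec W p w).1 = p * u) ∧
      w = p ^ (dec W p w).2 * (dec W p w).1 := by
  intro w
  induction w using Nat.strong_induction_on with
  | _ w ih =>
    intro hw hwW
    by_cases h : 2 ≤ p ∧ 0 < w ∧ p ∣ w ∧ w / p ∈ W
    · have hd : dec W p w = ((dec W p (w / p)).1, (dec W p (w / p)).2 + 1) := by
        rw [dec]; rw [dif_pos h]
      obtain ⟨-, -, hdvd, hmem⟩ := h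
      have hlt : w / p < w := Nat.div_lt_self hw (by omega)
      have hpos : 0 < w / p := Nat.div_pos (Nat.le_of_dvd hw hdvd) (by omega)
      obtain ⟨h1, h2, h3, h4⟩ := ih _ hlt hpos hmem
      rw [hd]
      refine ⟨h1, h2, h3, ?_⟩
      have hw2 : w = p * (w / p) := (Nat.mul_div_cancel' hdvd).symm
      conv_lhs => rw [hw2, h4]
      ring
    · have hd : dec W p w = (w, 0) := by rw [dec]; rw [dif_neg h]
      rw [hd]
      refine ⟨hwW, hw, ?_, by simp⟩
      rintro ⟨u, huW, rfl⟩
      exact h ⟨hp, hw, ⟨u, rfl⟩, by simpa [Nat.mul_div_cancel_left u (by omega : 0 < p)]⟩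

lemma dec_unique (hW : ∀ w ∈ W, 0 < w) (hpW : ∀ w ∈ W, p * w ∈ W) (hp : 2 ≤ p)
    {j : ℕ} (hjW : j ∈ W) (hj : ¬∃ u ∈ W, j = p * u) :
    ∀ k, dec W p (p ^ k * j) = (j, k) := by
  intro k
  induction k with
  | zero =>
    simp only [pow_zero, one_mul]
    rw [dec, dif_neg]
    rintro ⟨-, -, hdvd, hmem⟩
    exact hj ⟨j / p, hmem, (Nat.mul_div_cancel' hdvd).symm⟩
  | succ k ih =>
    have hj0 : 0 < j := hW j hjW
    have hcond : 2 ≤ p ∧ 0 < p ^ (k + 1) * j ∧ p ∣ p ^ (k + 1) * j ∧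
        (p ^ (k + 1) * j) / p ∈ W := by
      have hdvd : p ∣ p ^ (k + 1) * j := Dvd.dvd.mul_right (dvd_pow_self p k.succ_ne_zero) j
      have hdiv : (p ^ (k + 1) * j) / p = p ^ k * j := by
        rw [pow_succ, mul_comm (p ^ k) p, mul_assoc, Nat.mul_div_cancel_left _ (by omega : 0 < p)]
      exact ⟨hp, by positivity, hdvd, by rw [hdiv]; exact pow_mul_mem hpW hjW k⟩
    have hdiv : (p ^ (k + 1) * j) / p = p ^ k * j := by
      rw [pow_succ, mul_comm (p ^ k) p, mul_assoc, Nat.mul_div_cancel_left _ (by omega : 0 < p)]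
    rw [dec, dif_pos hcond, hdiv, ih]

lemma dec_inj (hW : ∀ w ∈ W, 0 < w) (hpW : ∀ w ∈ W, p * w ∈ W) (hp : 2 ≤ p)
    {j j' k k' : ℕ} (hjW : j ∈ W) (hj : ¬∃ u ∈ W, j = p * u)
    (hjW' : j' ∈ W) (hj' : ¬∃ u ∈ W, j' = p * u)
    (h : p ^ k * j = p ^ k' * j') : j = j' ∧ k = k' := by
  have h1 := dec_unique hW hpW hp hjW hj k
  have h2 := dec_unique hW hpW hp hjW' hj' k'
  rw [h, h2] at h1
  exact ⟨(Prod.mk.injEq _ _ _ _ ▸ h1).1.symm, (Prod.mk.injEq _ _ _ _ ▸ h1).2.symm⟩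

lemma dgt_lt (hp : 2 ≤ p) (k m : ℕ) : dgt p k m < p := Nat.mod_lt _ (by omega)

lemma dgt_zero (k : ℕ) : dgt p k 0 = 0 := by simp [dgt]

lemma dgt_eq_zero_of_lt (h : m < p ^ k) : dgt p k m = 0 := by
  simp [dgt, Nat.div_eq_of_lt h]

lemma dgt_succ (k m : ℕ) : dgt p (k + 1) m = dgt p k (m / p) := by
  simp only [dgt, Nat.div_div_eq_div_mul]
  rw [pow_succ, mul_comm (p ^ k) p, mul_comm p (p^k)]

lemma dgt_sum_eq (hp : 2 ≤ p) : ∀ {N m : ℕ}, m < p ^ N →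
    ∑ k ∈ range N, dgt p k m * p ^ k = m := by
  intro N
  induction N with
  | zero => intro m h; simp at h; simp [h]
  | succ N ih =>
    intro m h
    rw [Finset.sum_range_succ']
    have e1 : ∀ k, dgt p (k + 1) m * p ^ (k + 1) = p * (dgt p k (m / p) * p ^ k) := by
      intro k; rw [dgt_succ, pow_succ]; ring
    rw [Finset.sum_congr rfl fun k _ => e1 k, ← Finset.mul_sum]
    have hlt : m / p < p ^ N := by
      rw [Nat.div_lt_iff_lt_mul (by omega : 0 < p)]
      calc m < p ^ (N + 1) := h
        _ = p ^ N * p := by rw [pow_succ]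
    rw [ih hlt]
    simp only [dgt, pow_zero, Nat.div_one, mul_one]
    exact Nat.div_add_mod m p

lemma dgt_sum_digits (hp : 2 ≤ p) : ∀ (k N : ℕ) (a : ℕ → ℕ), (∀ i, a i < p) →
    dgt p k (∑ i ∈ range N, a i * p ^ i) = if k < N then a k else 0 := by
  intro k
  induction k with
  | zero =>
    intro N a ha
    cases N with
    | zero => simp [dgt_zero]
    | succ N =>
      rw [Finset.sum_range_succ']
      have e : (∑ i ∈ range N, a (i + 1) * p ^ (i + 1)) + a 0 * p ^ 0
          = p * (∑ i ∈ range N, a (i + 1) * p ^ i) + a 0 := by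
        rw [Finset.mul_sum]
        simp only [pow_zero, mul_one]
        congr 1
        exact Finset.sum_congr rfl fun i _ => by ring
      rw [e]
      simp only [dgt, pow_zero, Nat.div_one]
      rw [Nat.mul_add_mod]
      simp [Nat.mod_eq_of_lt (ha 0)]
  | succ k ih =>
    intro N a ha
    cases N with
    | zero => simp [dgt_zero]
    | succ N =>
      rw [Finset.sum_range_succ']
      have e : (∑ i ∈ range N, a (i + 1) * p ^ (i + 1)) + a 0 * p ^ 0
          = p * (∑ i ∈ range N, a (i + 1) * p ^ i) + a 0 := by
        rw [Finset.mul_sum]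
        simp only [pow_zero, mul_one]
        congr 1
        exact Finset.sum_congr rfl fun i _ => by ring
      rw [e, dgt_succ]
      have hdiv : (p * (∑ i ∈ range N, a (i + 1) * p ^ i) + a 0) / p
          = ∑ i ∈ range N, a (i + 1) * p ^ i := by
        rw [Nat.mul_add_div (by omega : 0 < p), Nat.div_eq_of_lt (ha 0)]
        omega
      rw [hdiv, ih N (fun i => a (i + 1)) (fun i => ha (i + 1))]
      simp [Nat.succ_lt_succ_iff]

def Dm (p m j : ℕ) : Multiset ℕ :=
  ∑ k ∈ Finset.range (m + 1), Multiset.replicate (dgt p k m) (p ^ k * j)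

def Phi (p : ℕ) (s : Multiset ℕ) : Multiset ℕ :=
  ∑ j ∈ s.toFinset, Dm p (s.count j) j

noncomputable def Psi (W : Set ℕ) (p : ℕ) (t : Multiset ℕ) : Multiset ℕ :=
  t.bind fun w => Multiset.replicate (p ^ (dec W p w).2) (dec W p w).1

lemma sum_finsum {α : Type*} (F : Finset α) (f : α → Multiset ℕ) :
    (∑ i ∈ F, f i).sum = ∑ i ∈ F, (f i).sum := by
  classical
  induction F using Finset.induction with
  | empty => simp
  | insert _ _ h ih => rw [Finset.sum_insert h, Finset.sum_insert h, Multiset.sum_add, ih]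

lemma pow_mul_left_injective (hp : 2 ≤ p) (hj : 0 < j) :
    ∀ {k k' : ℕ}, p ^ k * j = p ^ k' * j → k = k' := by
  intro k k' h
  have := Nat.eq_of_mul_eq_mul_right hj h
  exact Nat.pow_right_injective hp this

lemma count_Dm (hp : 2 ≤ p) {j : ℕ} (hj : 0 < j) (k m : ℕ) :
    count (p ^ k * j) (Dm p m j) = dgt p k m := by
  rw [Dm, Multiset.count_sum']
  by_cases hk : k ∈ Finset.range (m + 1)
  · rw [Finset.sum_eq_single_of_mem k hk]
    · rw [Multiset.count_replicate, if_pos rfl]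
    · intro i _ hne
      rw [Multiset.count_replicate, if_neg]
      exact fun h => hne (pow_mul_left_injective hp hj h)
  · have hk' : m < p ^ k := by
      have h1 : m < k := by simpa [Nat.lt_succ_iff] using hk
      exact h1.trans (Nat.lt_pow_self (n := k) (by omega))
    rw [dgt_eq_zero_of_lt hk']
    refine Finset.sum_eq_zero fun i hi => ?_
    rw [Multiset.count_replicate, if_neg]
    intro h
    exact hk (pow_mul_left_injective hp hj h ▸ hi)

lemma count_Dm_ne {w j m : ℕ} (h : ∀ k, w ≠ p ^ k * j) : count w (Dm p m j) = 0 := by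
  rw [Dm, Multiset.count_sum']
  refine Finset.sum_eq_zero fun i _ => ?_
  rw [Multiset.count_replicate, if_neg fun hh => h i hh.symm]

lemma mem_Dm {w j m : ℕ} (h : w ∈ Dm p m j) : ∃ k, w = p ^ k * j := by
  by_contra hc
  push_neg at hc
  rw [← Multiset.count_pos, count_Dm_ne hc] at h
  omega

lemma sum_Dm (hp : 2 ≤ p) (m j : ℕ) : (Dm p m j).sum = m * j := by
  rw [Dm, sum_finsum]
  have e : ∀ k, (Multiset.replicate (dgt p k m) (p ^ k * j)).sum = dgt p k m * p ^ k * j := by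
    intro k
    rw [Multiset.sum_replicate, smul_eq_mul]
    ring
  rw [Finset.sum_congr rfl fun k _ => e k, ← Finset.sum_mul]
  rw [dgt_sum_eq hp (lt_of_lt_of_le (Nat.lt_pow_self (n := m) (by omega))
    (Nat.pow_le_pow_right (by omega) (Nat.le_succ m)))]

lemma count_eq_toFinset_sum (s : Multiset ℕ) :
    s.sum = ∑ j ∈ s.toFinset, s.count j * j := by
  conv_lhs => rw [← Multiset.toFinset_sum_count_nsmul_eq s]
  rw [sum_finsum]
  exact Finset.sum_congr rfl fun j _ => by
    rw [Multiset.nsmul_singleton, Multiset.sum_replicate, smul_eq_mul]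

lemma sum_Phi (hp : 2 ≤ p) (s : Multiset ℕ) : (Phi p s).sum = s.sum := by
  rw [Phi, sum_finsum, count_eq_toFinset_sum s]
  exact Finset.sum_congr rfl fun j _ => sum_Dm hp _ _

lemma mem_Phi {w : ℕ} {s : Multiset ℕ} (h : w ∈ Phi p s) :
    ∃ j ∈ s, ∃ k, w = p ^ k * j := by
  rw [Phi] at h
  rw [Multiset.mem_sum] at h
  obtain ⟨j, hj, hw⟩ := h
  obtain ⟨k, hk⟩ := mem_Dm hw
  exact ⟨j, Multiset.mem_toFinset.mp hj, k, hk⟩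

lemma count_Phi (hW : ∀ w ∈ W, 0 < w) (hpW : ∀ w ∈ W, p * w ∈ W) (hp : 2 ≤ p)
    {s : Multiset ℕ} (hS : ∀ x ∈ s, x ∈ W ∧ ¬∃ u ∈ W, x = p * u)
    {j : ℕ} (hjW : j ∈ W) (hj : ¬∃ u ∈ W, j = p * u) (k : ℕ) :
    count (p ^ k * j) (Phi p s) = dgt p k (s.count j) := by
  have hj0 : 0 < j := hW j hjW
  rw [Phi, Multiset.count_sum']
  by_cases hjs : j ∈ s.toFinset
  · rw [Finset.sum_eq_single_of_mem j hjs]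
    · exact count_Dm hp hj0 k _
    · intro j' hj' hne
      refine count_Dm_ne fun k' heq => ?_
      obtain ⟨hj'W, hj'p⟩ := hS j' (Multiset.mem_toFinset.mp hj')
      exact hne ((dec_inj hW hpW hp hjW hj hj'W hj'p heq).1).symm
  · have hc : s.count j = 0 := by
      rw [Multiset.count_eq_zero]
      exact fun h => hjs (Multiset.mem_toFinset.mpr h)
    rw [hc, dgt_zero]
    refine Finset.sum_eq_zero fun j' hj' => ?_
    refine count_Dm_ne fun k' heq => ?_
    obtain ⟨hj'W, hj'p⟩ := hS j' (Multiset.mem_toFinset.mp hj')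
    have := (dec_inj hW hpW hp hjW hj hj'W hj'p heq).1
    exact hjs (this ▸ Multiset.mem_toFinset.mpr (Multiset.mem_toFinset.mp hj'))

lemma Psi_replicate (c w : ℕ) :
    Psi W p (Multiset.replicate c w) = Multiset.replicate (c * p ^ (dec W p w).2) (dec W p w).1 := by
  induction c with
  | zero => simp [Psi]
  | succ c ih =>
    rw [Multiset.replicate_succ, Psi, Multiset.cons_bind, ← Psi, ih]
    rw [← Multiset.replicate_add]
    congr 1
    ring

lemma Psi_finsum {α : Type*} (F : Finset α) (f : α → Multiset ℕ) :
    Psi W p (∑ i ∈ F, f i) = ∑ i ∈ F, Psi W p (f i) := by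
  classical
  induction F using Finset.induction with
  | empty => simp [Psi]
  | insert _ _ h ih =>
    rw [Finset.sum_insert h, Finset.sum_insert h, Psi, Multiset.add_bind, ← Psi, ← Psi, ih]

lemma sum_Psi (hW : ∀ w ∈ W, 0 < w) (hp : 2 ≤ p) {t : Multiset ℕ}
    (ht : ∀ w ∈ t, w ∈ W) : (Psi W p t).sum = t.sum := by
  induction t using Multiset.induction_on with
  | empty => simp [Psi]
  | cons a t ih =>
    rw [Psi, Multiset.cons_bind, ← Psi, Multiset.sum_add, Multiset.sum_cons]
    have haW : a ∈ W := ht a (Multiset.mem_cons_self a t)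
    obtain ⟨-, -, -, h4⟩ := dec_spec hp a (hW a haW) haW
    rw [Multiset.sum_replicate, smul_eq_mul, ih fun w hw => ht w (Multiset.mem_cons_of_mem hw)]
    congr 1
    omega

lemma Psi_Dm (hW : ∀ w ∈ W, 0 < w) (hpW : ∀ w ∈ W, p * w ∈ W) (hp : 2 ≤ p)
    {j : ℕ} (hjW : j ∈ W) (hj : ¬∃ u ∈ W, j = p * u) (m : ℕ) :
    Psi W p (Dm p m j) = Multiset.replicate m j := by
  rw [Dm, Psi_finsum]
  have e : ∀ k, Psi W p (Multiset.replicate (dgt p k m) (p ^ k * j))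
      = Multiset.replicate (dgt p k m * p ^ k) j := by
    intro k
    rw [Psi_replicate, dec_unique hW hpW hp hjW hj k]
  rw [Finset.sum_congr rfl fun k _ => e k]
  have : ∀ (F : Finset ℕ) (g : ℕ → ℕ),
      ∑ k ∈ F, Multiset.replicate (g k) j = Multiset.replicate (∑ k ∈ F, g k) j := by
    intro F g
    classical
    induction F using Finset.induction with
    | empty => simp
    | insert _ _ h ih => rw [Finset.sum_insert h, Finset.sum_insert h, ih, Multiset.replicate_add]
  rw [this, dgt_sum_eq hp (lt_of_lt_of_le (Nat.lt_pow_self (n := m) (by omega))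
    (Nat.pow_le_pow_right (by omega) (Nat.le_succ m)))]

lemma Psi_Phi (hW : ∀ w ∈ W, 0 < w) (hpW : ∀ w ∈ W, p * w ∈ W) (hp : 2 ≤ p)
    {s : Multiset ℕ} (hS : ∀ x ∈ s, x ∈ W ∧ ¬∃ u ∈ W, x = p * u) :
    Psi W p (Phi p s) = s := by
  rw [Phi, Psi_finsum]
  have e : ∀ j ∈ s.toFinset, Psi W p (Dm p (s.count j) j) = Multiset.replicate (s.count j) j := by
    intro j hj
    obtain ⟨hjW, hjp⟩ := hS j (Multiset.mem_toFinset.mp hj)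
    exact Psi_Dm hW hpW hp hjW hjp _
  rw [Finset.sum_congr rfl e]
  conv_rhs => rw [← Multiset.toFinset_sum_count_nsmul_eq s]
  exact Finset.sum_congr rfl fun j _ => (Multiset.nsmul_singleton _ _).symm

lemma count_Psi (hW : ∀ w ∈ W, 0 < w) (hpW : ∀ w ∈ W, p * w ∈ W) (hp : 2 ≤ p)
    {j : ℕ} (hjW : j ∈ W) (hj : ¬∃ u ∈ W, j = p * u) :
    ∀ (t : Multiset ℕ), (∀ w ∈ t, w ∈ W) →
      ∀ N : ℕ, (∀ k, N ≤ k → t.count (p ^ k * j) = 0) →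
      (Psi W p t).count j = ∑ k ∈ Finset.range N, t.count (p ^ k * j) * p ^ k := by
  intro t
  induction t using Multiset.induction_on with
  | empty => intro _ N _; simp [Psi]
  | cons a t ih =>
    intro htW N hN
    have haW : a ∈ W := htW a (Multiset.mem_cons_self a t)
    obtain ⟨h1, h2, h3, h4⟩ := dec_spec hp a (hW a haW) haW
    rw [Psi, Multiset.cons_bind, ← Psi, Multiset.count_add, Multiset.count_replicate]
    have htW' : ∀ w ∈ t, w ∈ W := fun w hw => htW w (Multiset.mem_cons_of_mem hw)
    have hN' : ∀ k, N ≤ k → t.count (p ^ k * j) = 0 := by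
      intro k hk
      have := hN k hk
      rw [Multiset.count_cons] at this
      omega
    rw [ih htW' N hN']
    have ecount : ∀ k, (a ::ₘ t).count (p ^ k * j) * p ^ k
        = t.count (p ^ k * j) * p ^ k + (if p ^ k * j = a then 1 else 0) * p ^ k := by
      intro k; rw [Multiset.count_cons]; ring
    rw [Finset.sum_congr rfl fun k _ => ecount k, Finset.sum_add_distrib]
    have key : ∑ k ∈ Finset.range N, (if p ^ k * j = a then 1 else 0) * p ^ k
        = if (dec W p a).1 = j then p ^ (dec W p a).2 else 0 := by
      by_cases hja : (dec W p a).1 = j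
      · have hcond : ∀ k, (p ^ k * j = a) ↔ k = (dec W p a).2 := by
          intro k
          constructor
          · intro hh
            rw [h4] at hh
            exact (dec_inj hW hpW hp hjW hj h1 h3 hh).2
          · rintro rfl
            rw [← hja]
            exact h4.symm
        have hka : (dec W p a).2 ∈ Finset.range N := by
          rw [Finset.mem_range]
          by_contra hc
          have hz := hN (dec W p a).2 (by omega)
          rw [Multiset.count_eq_zero] at hz
          refine hz ?_
          rw [(hcond _).mpr rfl]
          exact Multiset.mem_cons_self a t
        rw [if_pos hja]
        rw [Finset.sum_eq_single_of_mem (dec W p a).2 hka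
          (fun k _ hne => by rw [if_neg fun hh => hne ((hcond k).mp hh), zero_mul])]
        rw [if_pos ((hcond _).mpr rfl), one_mul]
      · rw [if_neg hja]
        refine Finset.sum_eq_zero fun k _ => ?_
        have hne : ¬(p ^ k * j = a) := by
          intro hh
          rw [h4] at hh
          exact hja (dec_inj hW hpW hp hjW hj h1 h3 hh).1.symm
        rw [if_neg hne, zero_mul]
    rw [key]
    omega

lemma mem_Psi_S (hp : 2 ≤ p) (hW : ∀ w ∈ W, 0 < w) {t : Multiset ℕ}
    (htW : ∀ w ∈ t, w ∈ W) :
    ∀ x ∈ Psi W p t, x ∈ W ∧ ¬∃ u ∈ W, x = p * u := by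
  intro x hx
  rw [Psi, Multiset.mem_bind] at hx
  obtain ⟨w, hw, hx⟩ := hx
  rw [Multiset.eq_of_mem_replicate hx]
  obtain ⟨h1, h2, h3, h4⟩ := dec_spec hp w (hW w (htW w hw)) (htW w hw)
  exact ⟨h1, h3⟩

lemma Phi_Psi (hW : ∀ w ∈ W, 0 < w) (hpW : ∀ w ∈ W, p * w ∈ W) (hp : 2 ≤ p)
    {t : Multiset ℕ} (htW : ∀ w ∈ t, w ∈ W) (htc : ∀ i, t.count i ≤ p - 1) :
    Phi p (Psi W p t) = t := by
  have hS := mem_Psi_S hp hW htW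
  rw [Multiset.ext]
  intro w
  set N := t.sum + 1 with hNdef
  have hbound : ∀ (j : ℕ), 0 < j → ∀ k, N ≤ k → t.count (p ^ k * j) = 0 := by
    intro j hj k hk
    rw [Multiset.count_eq_zero]
    intro hmem
    have h1 : p ^ k * j ≤ t.sum :=
      Multiset.single_le_sum (fun x _ => Nat.zero_le x) _ hmem
    have h2 : k < 2 ^ k := Nat.lt_two_pow_self
    have h3 : 2 ^ k ≤ p ^ k := Nat.pow_le_pow_left (by omega) k
    have h4 : p ^ k ≤ p ^ k * j := Nat.le_mul_of_pos_right _ hj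
    omega
  by_cases hw : ∃ j k, (j ∈ W ∧ ¬∃ u ∈ W, j = p * u) ∧ w = p ^ k * j
  · obtain ⟨j, k, ⟨hjW, hjp⟩, rfl⟩ := hw
    have hj0 : 0 < j := hW j hjW
    rw [count_Phi hW hpW hp hS hjW hjp k,
      count_Psi hW hpW hp hjW hjp t htW N (hbound j hj0),
      dgt_sum_digits hp k N (fun i => t.count (p ^ i * j))
        (fun i => lt_of_le_of_lt (htc _) (by omega))]
    by_cases hkN : k < N
    · rw [if_pos hkN]
    · rw [if_neg hkN, hbound j hj0 k (le_of_not_gt hkN)]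
  · have h1 : t.count w = 0 := by
      rw [Multiset.count_eq_zero]
      intro hmem
      have hwW := htW w hmem
      obtain ⟨d1, d2, d3, d4⟩ := dec_spec hp w (hW w hwW) hwW
      exact hw ⟨_, _, ⟨d1, d3⟩, d4⟩
    rw [h1, Multiset.count_eq_zero]
    intro hmem
    obtain ⟨j, hjmem, k, rfl⟩ := mem_Phi hmem
    obtain ⟨hjW, hjp⟩ := hS j hjmem
    exact hw ⟨j, k, ⟨hjW, hjp⟩, rfl⟩

end GlaisherAux


/-- Theorem 2.1 (second half): for `W ⊆ ℕ_{>0}` and `p ≥ 2` with `pW ⊆ W`, the set `X(n)`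
of partitions of `n` with all parts in `W ∖ pW` is in bijection with the set `Y(n)` of
partitions of `n` with all parts in `W` in which every number occurs at most `p − 1`
times; in particular `X(n)` and `Y(n)` have the same cardinality. -/
theorem partition_bijection (W : Set ℕ) (hW : ∀ w ∈ W, 0 < w)
    (p : ℕ) (hp : 2 ≤ p) (hpW : ∀ w ∈ W, p * w ∈ W) (n : ℕ) :
    Nonempty
      ({P : n.Partition // ∀ i ∈ P.parts, i ∈ W ∧ ¬∃ w ∈ W, i = p * w} ≃
        {P : n.Partition // (∀ i ∈ P.parts, i ∈ W) ∧
          ∀ i : ℕ, P.parts.count i ≤ p - 1}) := by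
  classical
  refine ⟨⟨fun P => ⟨⟨GlaisherAux.Phi p P.1.parts, ?_, ?_⟩, ?_, ?_⟩,
          fun Q => ⟨⟨GlaisherAux.Psi W p Q.1.parts, ?_, ?_⟩, ?_⟩,
          fun P => ?_, fun Q => ?_⟩⟩
  · -- positivity of parts of Phi
    intro i hi
    obtain ⟨j, hj, k, rfl⟩ := GlaisherAux.mem_Phi hi
    have hj0 : 0 < j := hW j (P.2 j hj).1
    positivity
  · rw [GlaisherAux.sum_Phi hp]
    exact P.1.parts_sum
  · -- parts of Phi lie in W
    intro i hi
    obtain ⟨j, hj, k, rfl⟩ := GlaisherAux.mem_Phi hi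
    exact GlaisherAux.pow_mul_mem hpW (P.2 j hj).1 k
  · -- multiplicities at most p - 1
    intro i
    by_cases hi : i ∈ GlaisherAux.Phi p P.1.parts
    · obtain ⟨j, hj, k, rfl⟩ := GlaisherAux.mem_Phi hi
      obtain ⟨hjW, hjp⟩ := P.2 j hj
      rw [GlaisherAux.count_Phi hW hpW hp P.2 hjW hjp k]
      have := GlaisherAux.dgt_lt hp k (P.1.parts.count j)
      omega
    · rw [Multiset.count_eq_zero_of_notMem hi]
      omega
  · -- positivity of parts of Psi
    intro i hi
    exact hW i (GlaisherAux.mem_Psi_S hp hW Q.2.1 i hi).1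
  · rw [GlaisherAux.sum_Psi hW hp Q.2.1]
    exact Q.1.parts_sum
  · -- parts of Psi lie in W ∖ pW
    exact fun i hi => GlaisherAux.mem_Psi_S hp hW Q.2.1 i hi
  · exact Subtype.ext (Nat.Partition.ext (GlaisherAux.Psi_Phi hW hpW hp P.2))
  · exact Subtype.ext (Nat.Partition.ext (GlaisherAux.Phi_Psi hW hpW hp Q.2.1 Q.2.2))
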